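/- Let I_E(d_S, d_J) = log₂(1 + γ_S (d_S² + H²)^{−α/2} / (γ_J (d_J² + H²)^{−α/2} + 1)), where d_S = ‖Q_S − W_E‖ and d_J = ‖Q_J − W_E‖. If ‖W_E − Ŵ_E‖ ≤ R_E, then I_E(‖Q_S − W_E‖, ‖Q_J − W_E‖) ≤ log₂(1 + γ_S ((‖Q_S − Ŵ_E‖ − R_E)² + H²)^{−α/2} / (γ_J ((‖Q_J − Ŵ_E‖ + R_E)² + H²)^{−α/2} + 1)), provided ‖Q_S − Ŵ_E‖ ≥ R_E. -/
import Mathlib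

theorem aux_11 (dS dJ dSh dJh γS γJ H α RE : ℝ) (hγS : 0 < γS) (hγJ : 0 < γJ)
    (hH : 0 < H) (hα : 2 ≤ α) (hRE : 0 ≤ RE)
    (hdS : 0 ≤ dS) (hdJ : 0 ≤ dJ) (hdJh : 0 ≤ dJh)
    (hS : dSh - RE ≤ dS) (hSnn : 0 ≤ dSh - RE) (hJ : dJ ≤ dJh + RE) :
    Real.logb 2 (1 + γS * (dS ^ 2 + H ^ 2) ^ (-(α / 2)) /
        (γJ * (dJ ^ 2 + H ^ 2) ^ (-(α / 2)) + 1)) ≤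
      Real.logb 2 (1 + γS * ((dSh - RE) ^ 2 + H ^ 2) ^ (-(α / 2)) /
        (γJ * ((dJh + RE) ^ 2 + H ^ 2) ^ (-(α / 2)) + 1)) := by
  have hz : -(α / 2) ≤ 0 := by linarith
  have hA : (0:ℝ) < (dSh - RE) ^ 2 + H ^ 2 := by positivity
  have hB' : (0:ℝ) < dJ ^ 2 + H ^ 2 := by positivity
  have hnum : (dS ^ 2 + H ^ 2) ^ (-(α / 2)) ≤ ((dSh - RE) ^ 2 + H ^ 2) ^ (-(α / 2)) := by
    apply Real.rpow_le_rpow_of_nonpos hA _ hz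
    nlinarith
  have hden : ((dJh + RE) ^ 2 + H ^ 2) ^ (-(α / 2)) ≤ (dJ ^ 2 + H ^ 2) ^ (-(α / 2)) := by
    apply Real.rpow_le_rpow_of_nonpos hB' _ hz
    nlinarith
  have hdenpos : (0:ℝ) < γJ * ((dJh + RE) ^ 2 + H ^ 2) ^ (-(α / 2)) + 1 := by positivity
  have hfrac : γS * (dS ^ 2 + H ^ 2) ^ (-(α / 2)) / (γJ * (dJ ^ 2 + H ^ 2) ^ (-(α / 2)) + 1) ≤
      γS * ((dSh - RE) ^ 2 + H ^ 2) ^ (-(α / 2)) /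
      (γJ * ((dJh + RE) ^ 2 + H ^ 2) ^ (-(α / 2)) + 1) := by
    apply div_le_div₀ (by positivity) (by nlinarith) hdenpos (by nlinarith)
  have hpos : (0:ℝ) < 1 + γS * (dS ^ 2 + H ^ 2) ^ (-(α / 2)) /
      (γJ * (dJ ^ 2 + H ^ 2) ^ (-(α / 2)) + 1) := by positivity
  exact Real.logb_le_logb_of_le (by norm_num) hpos (by linarith)

theorem stmt_11 (QS QJ WE WhatE : EuclideanSpace ℝ (Fin 2))
    (γS γJ H α RE : ℝ) (hγS : 0 < γS) (hγJ : 0 < γJ) (hH : 0 < H) (hα : 2 ≤ α)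
    (hRE : 0 ≤ RE) (hest : ‖WE - WhatE‖ ≤ RE) (hfar : ‖QS - WhatE‖ ≥ RE) :
    Real.logb 2 (1 + γS * (‖QS - WE‖ ^ 2 + H ^ 2) ^ (-(α / 2)) /
        (γJ * (‖QJ - WE‖ ^ 2 + H ^ 2) ^ (-(α / 2)) + 1)) ≤
      Real.logb 2 (1 + γS * ((‖QS - WhatE‖ - RE) ^ 2 + H ^ 2) ^ (-(α / 2)) /
        (γJ * ((‖QJ - WhatE‖ + RE) ^ 2 + H ^ 2) ^ (-(α / 2)) + 1)) := by
  have htriS : ‖QS - WhatE‖ ≤ ‖QS - WE‖ + ‖WE - WhatE‖ := by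
    calc ‖QS - WhatE‖ = ‖(QS - WE) + (WE - WhatE)‖ := by abel_nf
    _ ≤ ‖QS - WE‖ + ‖WE - WhatE‖ := norm_add_le _ _
  have htriJ : ‖QJ - WE‖ ≤ ‖QJ - WhatE‖ + ‖WE - WhatE‖ := by
    calc ‖QJ - WE‖ = ‖(QJ - WhatE) + (WhatE - WE)‖ := by abel_nf
    _ ≤ ‖QJ - WhatE‖ + ‖WhatE - WE‖ := norm_add_le _ _
    _ = ‖QJ - WhatE‖ + ‖WE - WhatE‖ := by rw [norm_sub_rev WhatE WE]
  exact aux_11 _ _ _ _ _ _ _ _ _ hγS hγJ hH hα hRE (norm_nonneg _) (norm_nonneg _)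
    (norm_nonneg _) (by linarith) (by linarith) (by linarith)
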